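/- Let H be a d×d Hermitian complex matrix and β > 0, with Gibbs state ρ_β := exp(−βH)/Tr(exp(−βH)). Let L be a linear map on d×d complex matrices satisfying Tr(L(X)) = 0 for every matrix X, and suppose its Hilbert–Schmidt adjoint L† is self-adjoint with respect to the KMS inner product, i.e. ⟨A, L†(B)⟩_{ρ_β} = ⟨L†(A), B⟩_{ρ_β} for all matrices A, B. Then L(ρ_β) = 0. -/

import Mathlib

open Matrix MeasureTheory Filter
open scoped ComplexOrder

noncomputable section

/-- The space of `d × d` complex matrices. -/
abbrev Mat (d : ℕ) : Type := Matrix (Fin d) (Fin d) ℂ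

/-- The Gibbs state `ρ_β = exp(-βH)/Tr(exp(-βH))`. -/
def gibbs {d : ℕ} (H : Mat d) (β : ℝ) : Mat d :=
  (Matrix.trace (NormedSpace.exp ((-β : ℂ) • H)))⁻¹ • NormedSpace.exp ((-β : ℂ) • H)

/-- The power `ρ_β^s = exp(-sβH)/Tr(exp(-βH))^s`. -/
def gibbsPow {d : ℕ} (H : Mat d) (β s : ℝ) : Mat d :=
  ((Matrix.trace (NormedSpace.exp ((-β : ℂ) • H))) ^ (s : ℂ))⁻¹ •
    NormedSpace.exp ((-(s * β) : ℂ) • H)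

/-- The Hilbert–Schmidt inner product `⟨A,B⟩₂ = Tr(A† B)`. -/
def hsInner {d : ℕ} (A B : Mat d) : ℂ := Matrix.trace (Aᴴ * B)

/-- The KMS inner product `⟨A,B⟩_{ρ_β} = Tr(A† ρ_β^{1/2} B ρ_β^{1/2})`. -/
def kmsInner {d : ℕ} (H : Mat d) (β : ℝ) (A B : Mat d) : ℂ :=
  Matrix.trace (Aᴴ * gibbsPow H β (1/2) * B * gibbsPow H β (1/2))

/-- The former `Matrix.PosSemidef.sqrt` (removed from Mathlib), with its old definition. -/
def psdSqrt {d : ℕ} {A : Mat d} (hA : A.PosSemidef) : Mat d :=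
  hA.1.eigenvectorUnitary.1 * diagonal ((↑) ∘ (√·) ∘ hA.1.eigenvalues) *
    (star hA.1.eigenvectorUnitary : Mat d)

/-- The trace norm `‖A‖₁ = Tr √(A†A)`. -/
def traceNorm {d : ℕ} (A : Mat d) : ℝ :=
  ((psdSqrt (Matrix.posSemidef_conjTranspose_mul_self A)).trace).re

/-- The operator (spectral) norm of a matrix. -/
def opNorm {d : ℕ} (A : Mat d) : ℝ :=
  ‖Matrix.toEuclideanCLM (𝕜 := ℂ) A‖

/-- The Frobenius / Hilbert–Schmidt norm `‖A‖₂ = √Tr(A†A)`. -/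
def frobNorm {d : ℕ} (A : Mat d) : ℝ :=
  Real.sqrt ((Matrix.trace (Aᴴ * A)).re)

attribute [local instance] Matrix.frobeniusNormedAddCommGroup Matrix.frobeniusNormedSpace

/-- The exponential of a linear endomorphism of matrix space. -/
def endExp {d : ℕ} (L : Mat d →ₗ[ℂ] Mat d) : Mat d →ₗ[ℂ] Mat d :=
  (@NormedSpace.exp _ _ _ (by exact (@NonUnitalSeminormedRing.toIsTopologicalRing _
    (@NonUnitalNormedRing.toNonUnitalSeminormedRing _ (@NormedRing.toNonUnitalNormedRing _
      (@ContinuousLinearMap.toNormedRing ℂ (Mat d) _ _ _)))))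
    (LinearMap.toContinuousLinearMap L)).toLinearMap

/-- The induced trace norm (1→1 norm) of a linear map on matrices. -/
def oneNorm {d : ℕ} (L : Mat d →ₗ[ℂ] Mat d) : ℝ :=
  ⨆ A : {A : Mat d // traceNorm A = 1}, traceNorm (L A.1)



lemma trace_sq_zero {d : ℕ} (A : Mat d) (h : Matrix.trace (Aᴴ * A) = 0) : A = 0 := by
  have hdiag : ∀ j, (Aᴴ * A) j j = dotProduct (star (fun i => A i j)) (fun i => A i j) := by
    intro j; simp [Matrix.mul_apply, dotProduct, Matrix.conjTranspose_apply]
  have hsum : ∑ j, (Aᴴ * A) j j = 0 := h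
  have hterm : ∀ j ∈ Finset.univ, (0:ℂ) ≤ (Aᴴ * A) j j := by
    intro j _; rw [hdiag]; exact dotProduct_star_self_nonneg _
  have hz := (Finset.sum_eq_zero_iff_of_nonneg hterm).1 hsum
  ext i j
  have := (dotProduct_star_self_eq_zero).1 ((hdiag j) ▸ hz j (Finset.mem_univ j))
  exact congr_fun this i


/-- A trace-annihilating generator whose Hilbert–Schmidt adjoint is self-adjoint
with respect to the KMS inner product annihilates the Gibbs state. -/
theorem stmt_1 {d : ℕ} (hd : 1 ≤ d) (H : Mat d) (hH : H.IsHermitian) (β : ℝ) (hβ : 0 < β)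
    (L Ladj : Mat d →ₗ[ℂ] Mat d)
    (hTr : ∀ X : Mat d, Matrix.trace (L X) = 0)
    (hadj : ∀ A B : Mat d, hsInner (L A) B = hsInner A (Ladj B))
    (hKMS : ∀ A B : Mat d, kmsInner H β A (Ladj B) = kmsInner H β (Ladj A) B) :
    L (gibbs H β) = 0 := by
  classical
  haveI : Nonempty (Fin d) := ⟨⟨0, hd⟩⟩
  set M : Mat d := NormedSpace.exp ((-β : ℂ) • H) with hMdef
  set F : Mat d := NormedSpace.exp ((-(1/2 * β) : ℂ) • H) with hFdef
  -- Hermitian exponentials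
  have hherm : ∀ c : ℂ, star c = c → (NormedSpace.exp (c • H))ᴴ = NormedSpace.exp (c • H) := by
    intro c hc
    rw [← Matrix.exp_conjTranspose, Matrix.conjTranspose_smul, hH.eq, hc]
  have hcomm : ∀ a b : ℂ, Commute (a • H) (b • H) := by
    intro a b
    unfold Commute SemiconjBy
    rw [smul_mul_smul_comm, smul_mul_smul_comm, mul_comm a b]
  have hcM : (-β : ℂ) = ((-β : ℝ) : ℂ) := by push_cast; ring
  have hcF : (-(1/2 * β) : ℂ) = ((-(1/2 * β) : ℝ) : ℂ) := by push_cast; ring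
  have hMH : Mᴴ = M := hherm _ (by rw [hcM]; exact Complex.conj_ofReal _)
  have hFH : Fᴴ = F := hherm _ (by rw [hcF]; exact Complex.conj_ofReal _)
  -- F * F = M
  have hFF : F * F = M := by
    rw [hFdef, hMdef, ← Matrix.exp_add_of_commute _ _ (hcomm _ _), ← add_smul]
    congr 2
    ring
  -- F ≠ 0
  have hFne : F ≠ 0 := by
    have h1 : F * NormedSpace.exp ((1/2 * β : ℂ) • H) = 1 := by
      rw [hFdef, ← Matrix.exp_add_of_commute _ _ (hcomm _ _), ← add_smul]
      have : (-(1/2 * β) : ℂ) + (1/2 * β : ℂ) = 0 := by ring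
      rw [this, zero_smul, NormedSpace.exp_zero]
    intro h0
    rw [h0, zero_mul] at h1
    exact one_ne_zero h1.symm
  set t : ℂ := Matrix.trace M with htdef
  have htF : t = Matrix.trace (Fᴴ * F) := by rw [htdef, hFH, hFF]
  have htne : t ≠ 0 := fun h => hFne (trace_sq_zero F (htF ▸ h))
  have htconj : star t = t := by
    have := Matrix.trace_conjTranspose M
    rw [hMH] at this
    simpa using this.symm
  -- P * P = gibbs
  set P : Mat d := gibbsPow H β (1/2) with hPdef
  have hPP : P * P = gibbs H β := by
    rw [hPdef, gibbsPow, gibbs, smul_mul_smul_comm]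
    have hc2 : ((1/2:ℝ):ℂ) = 1/2 := by norm_num
    rw [hc2, ← hFdef, hFF, ← hMdef, ← htdef]
    congr 1
    rw [← mul_inv, ← Complex.cpow_add _ _ htne]
    norm_num [Complex.cpow_one]
  -- gibbs Hermitian
  have hρH : (gibbs H β)ᴴ = gibbs H β := by
    rw [gibbs, Matrix.conjTranspose_smul, hMH, ← hMdef, ← htdef]
    congr 1
    rw [star_inv₀]
    exact congrArg _ htconj
  -- Ladj 1 = 0
  have hLadj1 : Ladj 1 = 0 := by
    have key : ∀ A : Mat d, Matrix.trace (Aᴴ * Ladj 1) = 0 := by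
      intro A
      have := hadj A 1
      rw [hsInner, hsInner, Matrix.mul_one, Matrix.trace_conjTranspose, hTr] at this
      simpa using this.symm
    exact trace_sq_zero _ (key (Ladj 1))
  -- key trace identity
  have hkey : ∀ B : Mat d, Matrix.trace (Ladj B * gibbs H β) = 0 := by
    intro B
    have h1 := hKMS 1 B
    rw [kmsInner, kmsInner, hLadj1, Matrix.conjTranspose_zero, Matrix.zero_mul,
      Matrix.zero_mul, Matrix.zero_mul, Matrix.trace_zero, Matrix.conjTranspose_one,
      Matrix.one_mul] at h1
    calc Matrix.trace (Ladj B * gibbs H β)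
        = Matrix.trace (Ladj B * (P * P)) := by rw [hPP]
      _ = Matrix.trace (P * Ladj B * P) := by
          rw [← Matrix.mul_assoc, Matrix.trace_mul_comm, Matrix.mul_assoc]
      _ = 0 := h1
  -- conclude
  have hfin : ∀ B : Mat d, Matrix.trace ((L (gibbs H β))ᴴ * B) = 0 := by
    intro B
    have := hadj (gibbs H β) B
    rw [hsInner, hsInner, hρH] at this
    rw [this, Matrix.trace_mul_comm]
    exact hkey B
  exact trace_sq_zero _ (hfin (L (gibbs H β)))


end
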